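/- Let f : ℝ^d → ℂ be a continuous function, let W be a finite-dimensional complex subspace of the space of functions from ℝ^d to ℂ, and let G be a dense additive subgroup of ℝ^d. If τ_g f ∈ W for every g ∈ G, then τ_h f ∈ W for every h ∈ ℝ^d. -/
import Mathlib

theorem translate_mem_of_dense_subgroup_translates_mem
    {d : ℕ} (f : (Fin d → ℝ) → ℂ) (hf : Continuous f)
    (W : Submodule ℂ ((Fin d → ℝ) → ℂ)) (hW : FiniteDimensional ℂ W)
    (G : AddSubgroup (Fin d → ℝ)) (hG : Dense (G : Set (Fin d → ℝ)))
    (hmem : ∀ g ∈ G, (fun x => f (x + g)) ∈ W) :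
    ∀ h : Fin d → ℝ, (fun x => f (x + h)) ∈ W := by
  have hWclosed : IsClosed (W : Set ((Fin d → ℝ) → ℂ)) :=
    Submodule.closed_of_finiteDimensional W
  have hcont : Continuous (fun h : Fin d → ℝ => (fun x => f (x + h))) :=
    continuous_pi fun x => hf.comp (continuous_const.add continuous_id)
  have hclosed : IsClosed {h : Fin d → ℝ | (fun x => f (x + h)) ∈ W} :=
    hWclosed.preimage hcont
  intro h
  exact closure_minimal (fun g hg => hmem g hg) hclosed (hG h)
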